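/- Let n ≥ 1 and let k : {I : ∅ ≠ I ⊆ [n]} → ℝ be a table of putative cumulants (extended by k_∅ = 0). For J ⊆ [n] define the transformed table k^{(J)} by k^{(J)}_B = (−1)^{|J ∩ B|} k_B for |B| ≥ 2 and k^{(J)}_{{i}} = 1 − k_{{i}} if i ∈ J, k^{(J)}_{{i}} = k_{{i}} otherwise. Then k lies in the space of cumulants 𝒦_n — i.e. k is the cumulant table of some probability distribution p : 2^[n] → ℝ with p_I ≥ 0 and ∑_I p_I = 1 — if and only if for every J ⊆ [n] the inequality ∑_{π ∈ Π([n])} ∏_{B ∈ π} k^{(J)}_B ≥ 0 holds. In particular 𝒦_n is a basic semialgebraic subset of ℝ^{2ⁿ−1} defined by these 2ⁿ polynomial inequalities. -/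

import Mathlib

open Finset

/-- The cumulants of a real table `μ` indexed by subsets of `[n]`. -/
noncomputable def cumulant {n : ℕ} (μ : Finset (Fin n) → ℝ) (I : Finset (Fin n)) : ℝ :=
  ∑ π : Finpartition I,
    (-1 : ℝ) ^ (π.parts.card - 1) * (Nat.factorial (π.parts.card - 1) : ℝ) *
      ∏ B ∈ π.parts, μ B

/-- The moments `μ_I = ∑_{L ⊇ I} p_L` of a real table `p`. -/
noncomputable def moment {n : ℕ} (p : Finset (Fin n) → ℝ) (I : Finset (Fin n)) : ℝ :=
  ∑ L ∈ univ.filter (fun L => I ⊆ L), p L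

/-- The transformed table `k^{(J)}`: `k^{(J)}_B = (−1)^{|J∩B|} k_B` for `|B| ≥ 2`,
and `k^{(J)}_{i} = 1 − k_{i}` if `i ∈ J`, `k^{(J)}_{i} = k_{i}` otherwise. -/
noncomputable def rhoTable {n : ℕ} (J : Finset (Fin n)) (k : Finset (Fin n) → ℝ) :
    Finset (Fin n) → ℝ :=
  fun B =>
    if B.card = 1 then (if B ⊆ J then 1 - k B else k B)
    else (-1 : ℝ) ^ (J ∩ B).card * k B

namespace CumAux

variable {n : ℕ}

/-- The moments of a cumulant table: `∑_{π ∈ Π(I)} ∏_{B ∈ π} k_B`. -/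
noncomputable def c2mF (k : Finset (Fin n) → ℝ) (I : Finset (Fin n)) : ℝ :=
  ∑ π : Finpartition I, ∏ B ∈ π.parts, k B

noncomputable def v (j : ℕ) : ℝ := (-1) ^ j * (Nat.factorial j : ℝ)

lemma cumulant_eq (μ : Finset (Fin n) → ℝ) (I : Finset (Fin n)) :
    cumulant μ I = ∑ π : Finpartition I, v (π.parts.card - 1) * ∏ B ∈ π.parts, μ B := rfl

lemma parts_empty (π : Finpartition (∅ : Finset (Fin n))) : π.parts = ∅ :=
  Finpartition.parts_eq_empty_iff.2 bot_eq_empty.symm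

lemma c2mF_empty (k : Finset (Fin n) → ℝ) : c2mF k (∅ : Finset (Fin n)) = 1 := by
  have h : ∀ π : Finpartition (∅ : Finset (Fin n)), (∏ B ∈ π.parts, k B) = 1 := by
    intro π; rw [parts_empty π, Finset.prod_empty]
  rw [c2mF]
  rw [Finset.sum_congr rfl (fun π _ => h π), Finset.sum_const, card_univ]
  have : Fintype.card (Finpartition (∅ : Finset (Fin n))) = 1 := by
    rw [Fintype.card_eq_one_iff]
    refine ⟨⊥, fun π => ?_⟩
    apply Finpartition.ext
    rw [parts_empty π, parts_empty]
  rw [this, one_smul]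

lemma not_mem_parts_sdiff {I E : Finset (Fin n)} (hE : E.Nonempty)
    (ρ : Finpartition (I \ E)) : E ∉ ρ.parts := by
  intro h
  obtain ⟨x, hx⟩ := hE
  have := ρ.le h hx
  rw [Finset.mem_sdiff] at this
  exact this.2 hx

/-- Glue an extra part `E` to a finpartition of `I \ E`. -/
noncomputable def glue (I E : Finset (Fin n)) (ρ : Finpartition (I \ E)) : Finpartition I :=
  if h : E.Nonempty ∧ E ⊆ I then
    (ρ.extend (b := E)
      (by simpa [← Finset.nonempty_iff_ne_empty] using h.1)
      sdiff_disjoint (sdiff_sup_cancel h.2))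
  else ⊥

lemma glue_parts {I E : Finset (Fin n)} (h1 : E.Nonempty) (h2 : E ⊆ I)
    (ρ : Finpartition (I \ E)) : (glue I E ρ).parts = insert E ρ.parts := by
  rw [glue, dif_pos ⟨h1, h2⟩]; rfl

lemma avoid_parts_of_mem {I E : Finset (Fin n)} (π : Finpartition I) (hE : E ∈ π.parts) :
    (π.avoid E).parts = π.parts.erase E := by
  ext d
  rw [Finpartition.mem_avoid, Finset.mem_erase]
  constructor
  · rintro ⟨c, hc, hcE, rfl⟩
    have hne : c ≠ E := fun h => hcE (h ▸ le_rfl)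
    have hd : Disjoint c E := π.disjoint hc hE hne
    rw [hd.sdiff_eq_left]
    exact ⟨hne, hc⟩
  · rintro ⟨hne, hd⟩
    refine ⟨d, hd, ?_, ?_⟩
    · intro hle
      exact (π.ne_bot hd) (((π.disjoint hd hE hne).eq_bot_of_le hle))
    · exact (π.disjoint hd hE hne).sdiff_eq_left

lemma glue_avoid {I E : Finset (Fin n)} (π : Finpartition I) (hE : E ∈ π.parts) :
    glue I E (π.avoid E) = π := by
  apply Finpartition.ext
  rw [glue_parts (π.nonempty_of_mem_parts hE) (π.le hE), avoid_parts_of_mem π hE,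
    Finset.insert_erase hE]

lemma avoid_glue {I E : Finset (Fin n)} (h1 : E.Nonempty) (h2 : E ⊆ I)
    (ρ : Finpartition (I \ E)) : (glue I E ρ).avoid E = ρ := by
  apply Finpartition.ext
  have hmem : E ∈ (glue I E ρ).parts := by
    rw [glue_parts h1 h2]; exact Finset.mem_insert_self _ _
  rw [avoid_parts_of_mem _ hmem, glue_parts h1 h2,
    Finset.erase_insert (not_mem_parts_sdiff h1 ρ)]

/-- The master bijection lemma: summing over a partition with a marked part is the same as
summing over the marked part and a partition of the complement. -/
lemma master (I : Finset (Fin n)) (F : Finset (Fin n) → Finpartition I → ℝ) :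
    ∑ π : Finpartition I, ∑ E ∈ π.parts, F E π
      = ∑ E ∈ I.powerset.filter (fun E => E ≠ ∅),
          ∑ ρ : Finpartition (I \ E), F E (glue I E ρ) := by
  have e1 : ∑ π : Finpartition I, ∑ E ∈ π.parts, F E π
      = (Finset.sigma (α := fun _ : Finpartition I => Finset (Fin n))
          (univ : Finset (Finpartition I)) (fun π => π.parts)).sum
          (fun x => F x.2 x.1) :=
    (Finset.sum_sigma (σ := fun _ : Finpartition I => Finset (Fin n)) _ _ (fun x => F x.2 x.1)).symm
  have e2 : ∑ E ∈ I.powerset.filter (fun E => E ≠ ∅),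
          ∑ ρ : Finpartition (I \ E), F E (glue I E ρ)
      = (Finset.sigma (α := fun E : Finset (Fin n) => Finpartition (I \ E))
          (I.powerset.filter (fun E => E ≠ ∅))
          (fun E => (univ : Finset (Finpartition (I \ E))))).sum
          (fun x => F x.1 (glue I x.1 x.2)) :=
    (Finset.sum_sigma (σ := fun E : Finset (Fin n) => Finpartition (I \ E)) _ _ (fun x => F x.1 (glue I x.1 x.2))).symm
  rw [e1, e2]
  refine Finset.sum_nbij' (fun x => ⟨x.2, x.1.avoid x.2⟩) (fun q => ⟨glue I q.1 q.2, q.1⟩)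
    ?_ ?_ ?_ ?_ ?_
  · intro x hx
    rw [Finset.mem_sigma] at hx
    rw [Finset.mem_sigma, Finset.mem_filter, Finset.mem_powerset]
    exact ⟨⟨x.1.le hx.2, (x.1.nonempty_of_mem_parts hx.2).ne_empty⟩, Finset.mem_univ _⟩
  · intro q hq
    rw [Finset.mem_sigma, Finset.mem_filter, Finset.mem_powerset] at hq
    rw [Finset.mem_sigma]
    refine ⟨Finset.mem_univ _, ?_⟩
    show q.1 ∈ (glue I q.1 q.2).parts
    rw [glue_parts (Finset.nonempty_iff_ne_empty.2 hq.1.2) hq.1.1]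
    exact Finset.mem_insert_self _ _
  · intro x hx
    obtain ⟨π, E⟩ := x
    rw [Finset.mem_sigma] at hx
    exact Sigma.ext (glue_avoid π hx.2) HEq.rfl
  · intro q hq
    obtain ⟨E, ρ⟩ := q
    rw [Finset.mem_sigma, Finset.mem_filter, Finset.mem_powerset] at hq
    exact Sigma.ext rfl
      (heq_of_eq (avoid_glue (Finset.nonempty_iff_ne_empty.2 hq.1.2) hq.1.1 ρ))
  · intro x hx
    obtain ⟨π, E⟩ := x
    rw [Finset.mem_sigma] at hx
    dsimp only
    rw [glue_avoid π hx.2]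

lemma parts_filter_mem_eq {I : Finset (Fin n)} {x : Fin n} (hx : x ∈ I) (π : Finpartition I) :
    π.parts.filter (fun E => x ∈ E) = {π.part x} := by
  ext E
  rw [Finset.mem_filter, Finset.mem_singleton]
  constructor
  · rintro ⟨h1, h2⟩
    exact (π.part_eq_of_mem h1 h2).symm
  · rintro rfl
    exact ⟨π.part_mem.2 hx, π.mem_part hx⟩

/-- Recursion: moments in terms of the part containing `x`. -/
lemma R1 (k : Finset (Fin n) → ℝ) {I : Finset (Fin n)} {x : Fin n} (hx : x ∈ I) :
    c2mF k I = ∑ E ∈ I.powerset.filter (fun E => x ∈ E), k E * c2mF k (I \ E) := by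
  have hm := master I (fun E π => if x ∈ E then ∏ B ∈ π.parts, k B else 0)
  have hL : ∑ π : Finpartition I, ∑ E ∈ π.parts,
      (if x ∈ E then ∏ B ∈ π.parts, k B else 0) = c2mF k I := by
    rw [c2mF]
    refine Finset.sum_congr rfl fun π _ => ?_
    rw [← Finset.sum_filter, parts_filter_mem_eq hx π, Finset.sum_singleton]
  have hR : ∑ E ∈ I.powerset.filter (fun E => E ≠ ∅),
      (∑ ρ : Finpartition (I \ E), if x ∈ E then ∏ B ∈ (glue I E ρ).parts, k B else 0)
      = ∑ E ∈ I.powerset.filter (fun E => x ∈ E), k E * c2mF k (I \ E) := by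
    rw [Finset.sum_filter, Finset.sum_filter]
    refine Finset.sum_congr rfl fun E hE => ?_
    rw [Finset.mem_powerset] at hE
    by_cases hxE : x ∈ E
    · have hne : E ≠ ∅ := by
        rintro rfl; exact absurd hxE (Finset.notMem_empty x)
      rw [if_pos hne, if_pos hxE, c2mF, Finset.mul_sum]
      refine Finset.sum_congr rfl fun ρ _ => ?_
      rw [if_pos hxE, glue_parts ⟨x, hxE⟩ hE,
        Finset.prod_insert (not_mem_parts_sdiff ⟨x, hxE⟩ ρ)]
    · rw [if_neg hxE]
      by_cases hne : E ≠ ∅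
      · rw [if_pos hne]
        simp [hxE]
      · rw [if_neg hne]
  rw [← hL, hm, hR]

/-- Recursion for cumulants. -/
lemma R3 (μ : Finset (Fin n) → ℝ) {I : Finset (Fin n)} {x : Fin n} (hx : x ∈ I) :
    cumulant μ I
      = μ I - ∑ E ∈ I.powerset.filter (fun E => E ≠ ∅ ∧ x ∉ E),
          μ E * cumulant μ (I \ E) := by
  have hm := master I
    (fun E π => if x ∉ E then v (π.parts.card - 2) * ∏ B ∈ π.parts, μ B else 0)
  have hone : ∀ π : Finpartition I,
      (π.parts.filter (fun E => x ∉ E)).card = π.parts.card - 1 := by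
    intro π
    have h2 := Finset.card_filter_add_card_filter_not
      (s := π.parts) (p := fun E => x ∈ E)
    rw [parts_filter_mem_eq hx π, Finset.card_singleton] at h2
    omega
  have hL : ∑ π : Finpartition I, ∑ E ∈ π.parts,
        (if x ∉ E then v (π.parts.card - 2) * ∏ B ∈ π.parts, μ B else 0)
      = ∑ π : Finpartition I,
          ((π.parts.card - 1 : ℕ) : ℝ) * (v (π.parts.card - 2) * ∏ B ∈ π.parts, μ B) := by
    refine Finset.sum_congr rfl fun π _ => ?_
    rw [← Finset.sum_filter, Finset.sum_const, hone π, nsmul_eq_mul]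
  have hR : ∑ E ∈ I.powerset.filter (fun E => E ≠ ∅),
        (∑ ρ : Finpartition (I \ E),
          if x ∉ E then v ((glue I E ρ).parts.card - 2) * ∏ B ∈ (glue I E ρ).parts, μ B else 0)
      = ∑ E ∈ I.powerset.filter (fun E => E ≠ ∅ ∧ x ∉ E), μ E * cumulant μ (I \ E) := by
    rw [Finset.sum_filter, Finset.sum_filter]
    refine Finset.sum_congr rfl fun E hE => ?_
    rw [Finset.mem_powerset] at hE
    by_cases hne : E ≠ ∅
    · rw [if_pos hne]
      by_cases hxE : x ∉ E
      · rw [if_pos (⟨hne, hxE⟩ : E ≠ ∅ ∧ x ∉ E)]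
        have hEne : E.Nonempty := Finset.nonempty_iff_ne_empty.2 hne
        rw [cumulant_eq, Finset.mul_sum]
        refine Finset.sum_congr rfl fun ρ _ => ?_
        rw [if_pos hxE, glue_parts hEne hE, Finset.prod_insert (not_mem_parts_sdiff hEne ρ),
          Finset.card_insert_of_notMem (not_mem_parts_sdiff hEne ρ),
          show ρ.parts.card + 1 - 2 = ρ.parts.card - 1 by omega]
        ring
      · rw [if_neg (by tauto : ¬(E ≠ ∅ ∧ x ∉ E))]
        simp only [if_neg hxE]
        exact Finset.sum_const_zero
    · rw [if_neg hne, if_neg (by tauto : ¬(E ≠ ∅ ∧ x ∉ E))]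
  rw [hL, hR] at hm
  have hbot : I ≠ (⊥ : Finset (Fin n)) := by
    rw [bot_eq_empty]
    exact (Finset.nonempty_iff_ne_empty.1 ⟨x, hx⟩)
  have key : cumulant μ I
      + ∑ π : Finpartition I,
          ((π.parts.card - 1 : ℕ) : ℝ) * (v (π.parts.card - 2) * ∏ B ∈ π.parts, μ B)
      = μ I := by
    rw [cumulant_eq, ← Finset.sum_add_distrib]
    have hsingle : ∀ π : Finpartition I, π.parts.card = 1 → π = Finpartition.indiscrete hbot := by
      intro π h1
      obtain ⟨b, hb⟩ := Finset.card_eq_one.1 h1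
      have hbI : b = I := by
        have := π.sup_parts
        rw [hb, Finset.sup_singleton] at this
        exact this
      apply Finpartition.ext
      rw [hb, hbI]
      rfl
    rw [Finset.sum_eq_single_of_mem (Finpartition.indiscrete hbot) (Finset.mem_univ _)]
    · have hparts : (Finpartition.indiscrete hbot).parts = {I} := rfl
      rw [hparts]
      simp only [Finset.card_singleton, Finset.prod_singleton]
      norm_num [v]
    · intro π _ hπ
      have hc1 : π.parts.card ≠ 1 := fun h => hπ (hsingle π h)
      have hc0 : π.parts.card ≠ 0 := by
        rw [Finset.card_ne_zero]
        exact π.parts_nonempty hbot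
      have hc2 : 2 ≤ π.parts.card := by omega
      obtain ⟨m, hmeq⟩ : ∃ m, π.parts.card = m + 2 := ⟨π.parts.card - 2, by omega⟩
      rw [hmeq, show m + 2 - 1 = m + 1 from rfl, show m + 2 - 2 = m from rfl]
      have harith : v (m + 1) + ((m + 1 : ℕ) : ℝ) * v m = 0 := by
        rw [v, v, pow_succ, Nat.factorial_succ]
        push_cast
        ring
      linear_combination (∏ B ∈ π.parts, μ B) * harith
  linarith [hm, key]

/-- Moment-cumulant inversion, one direction. -/
lemma Bmain (μ : Finset (Fin n) → ℝ) :
    ∀ I : Finset (Fin n), I.Nonempty → c2mF (cumulant μ) I = μ I := by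
  intro I
  induction I using Finset.strongInduction with
  | _ I IH =>
    intro hI
    obtain ⟨x, hx⟩ := hI
    rw [R1 (cumulant μ) hx]
    have hImem : I ∈ I.powerset.filter (fun E => x ∈ E) := by
      rw [Finset.mem_filter, Finset.mem_powerset]
      exact ⟨Finset.Subset.refl I, hx⟩
    rw [← Finset.add_sum_erase _ _ hImem, Finset.sdiff_self, c2mF_empty, mul_one]
    have hsum : ∑ E ∈ (I.powerset.filter (fun E => x ∈ E)).erase I,
        cumulant μ E * c2mF (cumulant μ) (I \ E)
        = ∑ E ∈ (I.powerset.filter (fun E => x ∈ E)).erase I, cumulant μ E * μ (I \ E) := by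
      refine Finset.sum_congr rfl fun E hE => ?_
      rw [Finset.mem_erase, Finset.mem_filter, Finset.mem_powerset] at hE
      obtain ⟨hne, hEI, hxE⟩ := hE
      have hssub : I \ E ⊂ I := Finset.sdiff_ssubset hEI ⟨x, hxE⟩
      have hnonempty : (I \ E).Nonempty := by
        obtain ⟨y, hy1, hy2⟩ :=
          Finset.exists_of_ssubset (Finset.ssubset_iff_subset_ne.2 ⟨hEI, hne⟩)
        exact ⟨y, Finset.mem_sdiff.2 ⟨hy1, hy2⟩⟩
      rw [IH _ hssub hnonempty]
    rw [hsum]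
    have h3 := R3 μ hx
    have hre : ∑ E ∈ (I.powerset.filter (fun E => x ∈ E)).erase I, cumulant μ E * μ (I \ E)
        = ∑ E ∈ I.powerset.filter (fun E => E ≠ ∅ ∧ x ∉ E), μ E * cumulant μ (I \ E) := by
      refine Finset.sum_nbij' (fun E => I \ E) (fun E => I \ E) ?_ ?_ ?_ ?_ ?_
      · intro E hE
        rw [Finset.mem_erase, Finset.mem_filter, Finset.mem_powerset] at hE
        rw [Finset.mem_filter, Finset.mem_powerset]
        refine ⟨Finset.sdiff_subset, ?_, ?_⟩
        · obtain ⟨y, hy1, hy2⟩ :=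
            Finset.exists_of_ssubset (Finset.ssubset_iff_subset_ne.2 ⟨hE.2.1, hE.1⟩)
          exact Finset.nonempty_iff_ne_empty.1 ⟨y, Finset.mem_sdiff.2 ⟨hy1, hy2⟩⟩
        · intro hmem
          rw [Finset.mem_sdiff] at hmem
          exact hmem.2 hE.2.2
      · intro E hE
        rw [Finset.mem_filter, Finset.mem_powerset] at hE
        rw [Finset.mem_erase, Finset.mem_filter, Finset.mem_powerset]
        refine ⟨?_, Finset.sdiff_subset, Finset.mem_sdiff.2 ⟨hx, hE.2.2⟩⟩
        obtain ⟨y, hy⟩ := Finset.nonempty_iff_ne_empty.2 hE.2.1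
        intro heq
        have hyI : y ∈ I := hE.1 hy
        rw [← heq, Finset.mem_sdiff] at hyI
        exact hyI.2 hy
      · intro E hE
        rw [Finset.mem_erase, Finset.mem_filter, Finset.mem_powerset] at hE
        exact Finset.sdiff_sdiff_eq_self hE.2.1
      · intro E hE
        rw [Finset.mem_filter, Finset.mem_powerset] at hE
        exact Finset.sdiff_sdiff_eq_self hE.1
      · intro E hE
        rw [Finset.mem_erase, Finset.mem_filter, Finset.mem_powerset] at hE
        rw [Finset.sdiff_sdiff_eq_self hE.2.1]
        ring
    rw [hre]
    linarith [h3]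

lemma c2m_inj (k₁ k₂ : Finset (Fin n) → ℝ) :
    ∀ I : Finset (Fin n), I.Nonempty → (∀ S, S ⊆ I → c2mF k₁ S = c2mF k₂ S) →
      k₁ I = k₂ I := by
  intro I
  induction I using Finset.strongInduction with
  | _ I IH =>
    intro hI hS
    obtain ⟨x, hx⟩ := hI
    have h1 := hS I (Finset.Subset.refl I)
    rw [R1 k₁ hx, R1 k₂ hx] at h1
    have hImem : I ∈ I.powerset.filter (fun E => x ∈ E) := by
      rw [Finset.mem_filter, Finset.mem_powerset]
      exact ⟨Finset.Subset.refl I, hx⟩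
    rw [← Finset.add_sum_erase _ _ hImem, ← Finset.add_sum_erase _ _ hImem,
      Finset.sdiff_self, c2mF_empty, c2mF_empty, mul_one, mul_one] at h1
    have hsame : ∑ E ∈ (I.powerset.filter (fun E => x ∈ E)).erase I, k₁ E * c2mF k₁ (I \ E)
        = ∑ E ∈ (I.powerset.filter (fun E => x ∈ E)).erase I, k₂ E * c2mF k₂ (I \ E) := by
      refine Finset.sum_congr rfl fun E hE => ?_
      rw [Finset.mem_erase, Finset.mem_filter, Finset.mem_powerset] at hE
      have hss : E ⊂ I := Finset.ssubset_iff_subset_ne.2 ⟨hE.2.1, hE.1⟩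
      rw [IH E hss ⟨x, hE.2.2⟩ (fun S hS' => hS S (hS'.trans hE.2.1)),
        hS (I \ E) Finset.sdiff_subset]
    linarith [h1, hsame]

/-- Moment-cumulant inversion, the other direction. -/
lemma c2m_cumulant (k : Finset (Fin n) → ℝ) {I : Finset (Fin n)} (hI : I.Nonempty) :
    cumulant (c2mF k) I = k I := by
  refine c2m_inj _ _ I hI fun S hS => ?_
  rcases S.eq_empty_or_nonempty with rfl | hne
  · rw [c2mF_empty, c2mF_empty]
  · exact Bmain (c2mF k) S hne

lemma rho_empty (k : Finset (Fin n) → ℝ) : rhoTable ∅ k = k := by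
  funext B
  rw [rhoTable]
  by_cases h : B.card = 1
  · rw [if_pos h, if_neg]
    intro hsub
    rw [Finset.subset_empty] at hsub
    simp [hsub] at h
  · rw [if_neg h, Finset.empty_inter, Finset.card_empty, pow_zero, one_mul]

lemma rho_single_not_mem {j : Fin n} {k : Finset (Fin n) → ℝ} {B : Finset (Fin n)}
    (hj : j ∉ B) : rhoTable {j} k B = k B := by
  rw [rhoTable]
  by_cases h : B.card = 1
  · rw [if_pos h, if_neg]
    intro hsub
    rw [Finset.subset_singleton_iff] at hsub
    rcases hsub with rfl | rfl
    · simp at h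
    · exact hj (Finset.mem_singleton_self j)
  · rw [if_neg h, Finset.singleton_inter_of_notMem hj, Finset.card_empty, pow_zero, one_mul]

lemma rho_single_mem {j : Fin n} {k : Finset (Fin n) → ℝ} {E : Finset (Fin n)}
    (hj : j ∈ E) : rhoTable {j} k E = (if E = {j} then 1 else 0) - k E := by
  rw [rhoTable]
  by_cases h : E.card = 1
  · obtain ⟨a, rfl⟩ := Finset.card_eq_one.1 h
    rw [Finset.mem_singleton] at hj
    subst hj
    rw [if_pos h, if_pos (Finset.Subset.refl _), if_pos rfl]
  · have hne : E ≠ {j} := fun hE => h (hE ▸ Finset.card_singleton j)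
    rw [if_neg h, if_neg hne, Finset.singleton_inter_of_mem hj, Finset.card_singleton,
      pow_one, zero_sub, neg_one_mul]

lemma c2m_rho_single_not_mem {j : Fin n} {k : Finset (Fin n) → ℝ} {I : Finset (Fin n)}
    (hjI : j ∉ I) : c2mF (rhoTable {j} k) I = c2mF k I := by
  rw [c2mF, c2mF]
  exact Finset.sum_congr rfl fun π _ => Finset.prod_congr rfl fun B hB =>
    rho_single_not_mem (fun hjB => hjI (π.le hB hjB))

lemma c2m_rho_single_mem {j : Fin n} {k : Finset (Fin n) → ℝ} {I : Finset (Fin n)}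
    (hjI : j ∈ I) : c2mF (rhoTable {j} k) I = c2mF k (I.erase j) - c2mF k I := by
  rw [R1 (rhoTable {j} k) hjI]
  have hstep : ∀ E ∈ I.powerset.filter (fun E => j ∈ E),
      rhoTable {j} k E * c2mF (rhoTable {j} k) (I \ E)
      = (if E = {j} then c2mF k (I \ E) else 0) - k E * c2mF k (I \ E) := by
    intro E hE
    rw [Finset.mem_filter] at hE
    have h1 : c2mF (rhoTable {j} k) (I \ E) = c2mF k (I \ E) :=
      c2m_rho_single_not_mem (fun hmem => (Finset.mem_sdiff.1 hmem).2 hE.2)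
    rw [h1, rho_single_mem hE.2]
    split_ifs with h
    · ring
    · ring
  rw [Finset.sum_congr rfl hstep, Finset.sum_sub_distrib, ← R1 k hjI,
    Finset.sum_ite_eq' (I.powerset.filter (fun E => j ∈ E)) {j} (fun E => c2mF k (I \ E))]
  have hmem : ({j} : Finset (Fin n)) ∈ I.powerset.filter (fun E => j ∈ E) := by
    rw [Finset.mem_filter, Finset.mem_powerset]
    exact ⟨Finset.singleton_subset_iff.2 hjI, Finset.mem_singleton_self j⟩
  rw [if_pos hmem, Finset.erase_eq]

lemma rho_insert {j : Fin n} {J : Finset (Fin n)} (hj : j ∉ J) (k : Finset (Fin n) → ℝ) :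
    rhoTable (insert j J) k = rhoTable {j} (rhoTable J k) := by
  funext B
  simp only [rhoTable]
  by_cases h : B.card = 1
  · rw [if_pos h, if_pos h, if_pos h]
    obtain ⟨i, rfl⟩ := Finset.card_eq_one.1 h
    by_cases hij : i = j
    · subst hij
      rw [if_pos (Finset.singleton_subset_iff.2 (Finset.mem_insert_self i J)),
        if_pos (Finset.Subset.refl _),
        if_neg (fun hs => hj (Finset.singleton_subset_iff.1 hs))]
    · rw [if_neg (fun hs => hij (Finset.mem_singleton.1 (Finset.singleton_subset_iff.1 hs)))]
      by_cases hiJ : i ∈ J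
      · rw [if_pos (Finset.singleton_subset_iff.2 (Finset.mem_insert_of_mem hiJ)),
          if_pos (Finset.singleton_subset_iff.2 hiJ)]
      · rw [if_neg, if_neg (fun hs => hiJ (Finset.singleton_subset_iff.1 hs))]
        intro hs
        rcases Finset.mem_insert.1 (Finset.singleton_subset_iff.1 hs) with h' | h'
        · exact hij h'
        · exact hiJ h'
  · rw [if_neg h, if_neg h, if_neg h]
    have hins : (insert j J) ∩ B = ({j} ∩ B) ∪ (J ∩ B) := by
      rw [Finset.insert_eq, Finset.union_inter_distrib_right]
    have hdisj : Disjoint (({j} : Finset (Fin n)) ∩ B) (J ∩ B) := by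
      rw [Finset.disjoint_left]
      intro a ha1 ha2
      rw [Finset.mem_inter, Finset.mem_singleton] at ha1
      rw [Finset.mem_inter] at ha2
      exact hj (ha1.1 ▸ ha2.1)
    rw [hins, Finset.card_union_of_disjoint hdisj, pow_add]
    ring

lemma symmDiff_singleton_of_mem {j : Fin n} {L : Finset (Fin n)} (hj : j ∈ L) :
    symmDiff L {j} = L.erase j := by
  ext a
  rw [Finset.mem_symmDiff, Finset.mem_erase]
  by_cases ha : a = j
  · subst ha
    simp [hj]
  · simp [ha, Finset.mem_singleton]

lemma symmDiff_singleton_of_not_mem {j : Fin n} {L : Finset (Fin n)} (hj : j ∉ L) :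
    symmDiff L {j} = insert j L := by
  ext a
  rw [Finset.mem_symmDiff, Finset.mem_insert]
  by_cases ha : a = j
  · subst ha
    simp [hj]
  · simp [ha, Finset.mem_singleton]

lemma moment_flip_single (q : Finset (Fin n) → ℝ) (j : Fin n) (I : Finset (Fin n)) :
    moment (fun L => q (symmDiff L {j})) I =
      if j ∈ I then moment q (I.erase j) - moment q I else moment q I := by
  split_ifs with hj
  · have hsplit := Finset.sum_filter_add_sum_filter_not
      (univ.filter (fun M : Finset (Fin n) => I.erase j ⊆ M)) (fun M => j ∈ M) q
    have hfil1 : (univ.filter (fun M : Finset (Fin n) => I.erase j ⊆ M)).filter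
        (fun M => j ∈ M) = univ.filter (fun M => I ⊆ M) := by
      rw [Finset.filter_filter]
      refine Finset.filter_congr fun M _ => ?_
      constructor
      · rintro ⟨h1, h2⟩ a ha
        by_cases haj : a = j
        · exact haj ▸ h2
        · exact h1 (Finset.mem_erase.2 ⟨haj, ha⟩)
      · intro hIM
        exact ⟨(Finset.erase_subset _ _).trans hIM, hIM hj⟩
    have hmain : moment (fun L => q (symmDiff L {j})) I
        = ∑ M ∈ (univ.filter (fun M : Finset (Fin n) => I.erase j ⊆ M)).filter
            (fun M => ¬ j ∈ M), q M := by
      rw [moment]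
      refine Finset.sum_nbij' (fun L => L.erase j) (fun M => insert j M) ?_ ?_ ?_ ?_ ?_
      · intro L hL
        rw [Finset.mem_filter] at hL
        rw [Finset.mem_filter, Finset.mem_filter]
        exact ⟨⟨Finset.mem_univ _, Finset.erase_subset_erase _ hL.2⟩,
          Finset.notMem_erase _ _⟩
      · intro M hM
        rw [Finset.mem_filter, Finset.mem_filter] at hM
        rw [Finset.mem_filter]
        refine ⟨Finset.mem_univ _, fun a ha => ?_⟩
        by_cases haj : a = j
        · exact haj ▸ Finset.mem_insert_self _ _
        · exact Finset.mem_insert_of_mem (hM.1.2 (Finset.mem_erase.2 ⟨haj, ha⟩))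
      · intro L hL
        rw [Finset.mem_filter] at hL
        exact Finset.insert_erase (hL.2 hj)
      · intro M hM
        rw [Finset.mem_filter, Finset.mem_filter] at hM
        exact Finset.erase_insert hM.2
      · intro L hL
        rw [Finset.mem_filter] at hL
        rw [symmDiff_singleton_of_mem (hL.2 hj)]
    rw [hmain, moment, moment, ← hfil1]
    linarith [hsplit]
  · rw [moment, moment]
    have hsub : ∀ L : Finset (Fin n), I ⊆ L → I ⊆ symmDiff L {j} := by
      intro L hL a ha
      rw [Finset.mem_symmDiff]
      exact Or.inl ⟨hL ha, fun hmem => hj ((Finset.mem_singleton.1 hmem) ▸ ha)⟩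
    refine Finset.sum_nbij' (fun L => symmDiff L {j}) (fun M => symmDiff M {j})
      ?_ ?_ ?_ ?_ ?_
    · intro L hL
      rw [Finset.mem_filter] at hL
      exact Finset.mem_filter.2 ⟨Finset.mem_univ _, hsub L hL.2⟩
    · intro M hM
      rw [Finset.mem_filter] at hM
      exact Finset.mem_filter.2 ⟨Finset.mem_univ _, hsub M hM.2⟩
    · intro L _
      exact symmDiff_symmDiff_cancel_right {j} L
    · intro M _
      exact symmDiff_symmDiff_cancel_right {j} M
    · intro L _
      rfl

lemma MJ (k : Finset (Fin n) → ℝ) (p : Finset (Fin n) → ℝ)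
    (hc : ∀ I, c2mF k I = moment p I) :
    ∀ (J I : Finset (Fin n)),
      c2mF (rhoTable J k) I = moment (fun L => p (symmDiff L J)) I := by
  intro J
  induction J using Finset.induction_on with
  | empty =>
    intro I
    rw [rho_empty]
    have hfun : (fun L : Finset (Fin n) => p (symmDiff L ∅)) = p := by
      funext L
      rw [← Finset.bot_eq_empty, symmDiff_bot]
    rw [hfun]
    exact hc I
  | @insert j J hj IH =>
    intro I
    rw [rho_insert hj]
    have hq : ∀ L : Finset (Fin n),
        p (symmDiff L (insert j J)) = p (symmDiff (symmDiff L {j}) J) := by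
      intro L
      have hins : (insert j J : Finset (Fin n)) = symmDiff {j} J := by
        rw [Finset.insert_eq]
        exact ((Finset.disjoint_singleton_left.2 hj).symmDiff_eq_sup).symm
      rw [hins, ← symmDiff_assoc]
    by_cases hjI : j ∈ I
    · calc c2mF (rhoTable {j} (rhoTable J k)) I
          = c2mF (rhoTable J k) (I.erase j) - c2mF (rhoTable J k) I :=
            c2m_rho_single_mem hjI
        _ = moment (fun L => p (symmDiff L J)) (I.erase j)
            - moment (fun L => p (symmDiff L J)) I := by rw [IH, IH]
        _ = moment (fun L => p (symmDiff (symmDiff L {j}) J)) I := by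
            rw [moment_flip_single (fun L => p (symmDiff L J)) j I, if_pos hjI]
        _ = moment (fun L => p (symmDiff L (insert j J))) I := by
            rw [moment, moment]
            exact Finset.sum_congr rfl fun L _ => (hq L).symm
    · calc c2mF (rhoTable {j} (rhoTable J k)) I
          = c2mF (rhoTable J k) I := c2m_rho_single_not_mem hjI
        _ = moment (fun L => p (symmDiff L J)) I := IH I
        _ = moment (fun L => p (symmDiff (symmDiff L {j}) J)) I := by
            rw [moment_flip_single (fun L => p (symmDiff L J)) j I, if_neg hjI]
        _ = moment (fun L => p (symmDiff L (insert j J))) I := by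
            rw [moment, moment]
            exact Finset.sum_congr rfl fun L _ => (hq L).symm

/-- Möbius inversion: candidate probability table from moments. -/
noncomputable def mobp (μ : Finset (Fin n) → ℝ) (I : Finset (Fin n)) : ℝ :=
  ∑ L ∈ univ.filter (fun L => I ⊆ L), (-1 : ℝ) ^ ((L \ I).card) * μ L

lemma neg_one_pow_sub {a t : ℕ} (h : t ≤ a) : (-1 : ℝ) ^ (a - t) = (-1) ^ a * (-1) ^ t := by
  have hsq : ((-1 : ℝ) ^ t) * ((-1) ^ t) = 1 := by
    rw [← pow_add]
    exact Even.neg_one_pow ⟨t, rfl⟩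
  calc (-1 : ℝ) ^ (a - t) = (-1) ^ (a - t) * (((-1) ^ t) * ((-1) ^ t)) := by
        rw [hsq, mul_one]
    _ = ((-1) ^ (a - t) * (-1) ^ t) * (-1) ^ t := by ring
    _ = (-1) ^ a * (-1) ^ t := by rw [← pow_add, Nat.sub_add_cancel h]

lemma sum_powerset_neg_one (s : Finset (Fin n)) :
    ∑ T ∈ s.powerset, (-1 : ℝ) ^ T.card = if s = ∅ then 1 else 0 := by
  have hz := Finset.sum_powerset_neg_one_pow_card (x := s)
  have : ((∑ T ∈ s.powerset, (-1 : ℤ) ^ T.card : ℤ) : ℝ)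
      = ∑ T ∈ s.powerset, (-1 : ℝ) ^ T.card := by
    push_cast
    rfl
  rw [← this, hz]
  split_ifs <;> norm_num

lemma L2a (μ : Finset (Fin n) → ℝ) (I : Finset (Fin n)) : moment (mobp μ) I = μ I := by
  rw [moment]
  have h1 : ∑ L ∈ univ.filter (fun L => I ⊆ L), mobp μ L
      = ∑ L : Finset (Fin n), ∑ M : Finset (Fin n),
          (if I ⊆ L ∧ L ⊆ M then (-1 : ℝ) ^ ((M \ L).card) * μ M else 0) := by
    rw [Finset.sum_filter]
    refine Finset.sum_congr rfl fun L _ => ?_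
    by_cases hIL : I ⊆ L
    · rw [if_pos hIL, mobp, Finset.sum_filter]
      refine Finset.sum_congr rfl fun M _ => ?_
      by_cases hLM : L ⊆ M
      · rw [if_pos hLM, if_pos ⟨hIL, hLM⟩]
      · rw [if_neg hLM, if_neg (fun h => hLM h.2)]
    · rw [if_neg hIL]
      symm
      exact Finset.sum_eq_zero fun M _ => if_neg (fun h => hIL h.1)
  rw [h1, Finset.sum_comm]
  have h2 : ∀ M : Finset (Fin n), ∑ L : Finset (Fin n),
      (if I ⊆ L ∧ L ⊆ M then (-1 : ℝ) ^ ((M \ L).card) * μ M else 0)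
      = (if M = I then 1 else 0) * μ M := by
    intro M
    by_cases hIM : I ⊆ M
    · have hfact : ∑ L : Finset (Fin n),
          (if I ⊆ L ∧ L ⊆ M then (-1 : ℝ) ^ ((M \ L).card) * μ M else 0)
          = (∑ L ∈ univ.filter (fun L => I ⊆ L ∧ L ⊆ M), (-1 : ℝ) ^ ((M \ L).card)) * μ M := by
        rw [Finset.sum_mul, ← Finset.sum_filter]
      rw [hfact]
      have hbij : ∑ L ∈ univ.filter (fun L => I ⊆ L ∧ L ⊆ M), (-1 : ℝ) ^ ((M \ L).card)
          = ∑ T ∈ (M \ I).powerset, (-1 : ℝ) ^ ((M \ I).card - T.card) := by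
        refine Finset.sum_nbij' (fun L => L \ I) (fun T => I ∪ T) ?_ ?_ ?_ ?_ ?_
        · intro L hL
          rw [Finset.mem_filter] at hL
          exact Finset.mem_powerset.2 (Finset.sdiff_subset_sdiff hL.2.2 (Finset.Subset.refl I))
        · intro T hT
          rw [Finset.mem_powerset] at hT
          rw [Finset.mem_filter]
          exact ⟨Finset.mem_univ _, Finset.subset_union_left,
            Finset.union_subset hIM (hT.trans Finset.sdiff_subset)⟩
        · intro L hL
          rw [Finset.mem_filter] at hL
          exact Finset.union_sdiff_of_subset hL.2.1
        · intro T hT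
          rw [Finset.mem_powerset] at hT
          exact Finset.union_sdiff_cancel_left
            (Finset.disjoint_left.2 fun a haI haT => (Finset.mem_sdiff.1 (hT haT)).2 haI)
        · intro L hL
          rw [Finset.mem_filter] at hL
          congr 1
          have c1 : (M \ L).card = M.card - L.card := Finset.card_sdiff_of_subset hL.2.2
          have c2 : (L \ I).card = L.card - I.card := Finset.card_sdiff_of_subset hL.2.1
          have c3 : (M \ I).card = M.card - I.card := Finset.card_sdiff_of_subset hIM
          have le1 : I.card ≤ L.card := Finset.card_le_card hL.2.1
          have le2 : L.card ≤ M.card := Finset.card_le_card hL.2.2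
          omega
      rw [hbij]
      have hps : ∑ T ∈ (M \ I).powerset, (-1 : ℝ) ^ ((M \ I).card - T.card)
          = (-1 : ℝ) ^ ((M \ I).card) * ∑ T ∈ (M \ I).powerset, (-1 : ℝ) ^ T.card := by
        rw [Finset.mul_sum]
        refine Finset.sum_congr rfl fun T hT => ?_
        exact neg_one_pow_sub (Finset.card_le_card (Finset.mem_powerset.1 hT))
      rw [hps, sum_powerset_neg_one]
      by_cases hMI : M = I
      · subst hMI
        rw [if_pos (Finset.sdiff_self M), if_pos rfl, Finset.sdiff_self,
          Finset.card_empty, pow_zero, mul_one]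
      · have hne : M \ I ≠ ∅ := by
          intro h0
          exact hMI (Finset.Subset.antisymm (by
            intro a haM
            by_contra haI
            exact absurd (Finset.mem_sdiff.2 ⟨haM, haI⟩) (h0 ▸ Finset.notMem_empty a)) hIM)
        rw [if_neg hne, if_neg hMI, mul_zero]
    · rw [if_neg (fun hMI : M = I => hIM (hMI ▸ Finset.Subset.refl I)), zero_mul]
      exact Finset.sum_eq_zero fun L _ => if_neg (fun h => hIM (h.1.trans h.2))
  rw [Finset.sum_congr rfl (fun M _ => h2 M)]
  have h3 : ∀ M : Finset (Fin n), (if M = I then 1 else 0) * μ M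
      = if M = I then μ M else 0 := by
    intro M
    split_ifs
    · rw [one_mul]
    · rw [zero_mul]
  rw [Finset.sum_congr rfl (fun M _ => h3 M), Finset.sum_ite_eq' univ I μ,
    if_pos (Finset.mem_univ I)]

lemma moment_empty (p : Finset (Fin n) → ℝ) :
    moment p (∅ : Finset (Fin n)) = ∑ I : Finset (Fin n), p I := by
  simp [moment]

lemma moment_univ (p : Finset (Fin n) → ℝ) : moment p (univ : Finset (Fin n)) = p univ := by
  rw [moment]
  have : univ.filter (fun L : Finset (Fin n) => univ ⊆ L) = {univ} := by
    ext L
    simp [Finset.univ_subset_iff, eq_comm]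
  rw [this, Finset.sum_singleton]

end CumAux

open CumAux in
/-- a table `k` (with `k_∅ = 0`) lies in the space of cumulants `𝒦_n`
— i.e. is the cumulant table of some probability distribution — if and only if
`∑_{π ∈ Π([n])} ∏_{B ∈ π} k^{(J)}_B ≥ 0` for every `J ⊆ [n]`. Hence `𝒦_n` is a
basic semialgebraic set defined by these `2ⁿ` polynomial inequalities. -/
theorem cumulant_space_basic_semialgebraic {n : ℕ} (hn : 1 ≤ n)
    (k : Finset (Fin n) → ℝ) (hk0 : k ∅ = 0) :
    (∃ p : Finset (Fin n) → ℝ,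
      (∀ I : Finset (Fin n), 0 ≤ p I) ∧ (∑ I : Finset (Fin n), p I = 1) ∧
      (∀ I : Finset (Fin n), I.Nonempty → k I = cumulant (moment p) I)) ↔
    (∀ J : Finset (Fin n),
      0 ≤ ∑ π : Finpartition (univ : Finset (Fin n)),
            ∏ B ∈ π.parts, rhoTable J k B) := by
  constructor
  · rintro ⟨p, hp, hsum, hcum⟩ J
    have hc : ∀ I, c2mF k I = moment p I := by
      intro I
      rcases I.eq_empty_or_nonempty with rfl | hne
      · rw [c2mF_empty, moment_empty, hsum]
      · have heq : c2mF k I = c2mF (cumulant (moment p)) I := by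
          rw [c2mF, c2mF]
          exact Finset.sum_congr rfl fun π _ => Finset.prod_congr rfl fun B hB =>
            hcum B (π.nonempty_of_mem_parts hB)
        rw [heq]
        exact Bmain (moment p) I hne
    have hMJ := MJ k p hc J univ
    have hrfl : (∑ π : Finpartition (univ : Finset (Fin n)), ∏ B ∈ π.parts, rhoTable J k B)
        = c2mF (rhoTable J k) univ := rfl
    rw [hrfl, hMJ, moment_univ]
    exact hp _
  · intro hineq
    refine ⟨mobp (c2mF k), ?_, ?_, ?_⟩
    · intro I
      have hc : ∀ S, c2mF k S = moment (mobp (c2mF k)) S := fun S => (L2a (c2mF k) S).symm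
      have h1 := MJ k (mobp (c2mF k)) hc (univ \ I) univ
      have h2 : symmDiff (univ : Finset (Fin n)) (univ \ I) = I := by
        ext a
        rw [Finset.mem_symmDiff]
        simp
      have h0 := hineq (univ \ I)
      rw [show (∑ π : Finpartition (univ : Finset (Fin n)),
          ∏ B ∈ π.parts, rhoTable (univ \ I) k B)
          = c2mF (rhoTable (univ \ I) k) univ from rfl, h1, moment_univ] at h0
      rw [h2] at h0
      exact h0
    · rw [← moment_empty, L2a]
      exact c2mF_empty k
    · intro I hne
      have hm : moment (mobp (c2mF k)) = c2mF k := funext (L2a (c2mF k))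
      rw [hm]
      exact (c2m_cumulant k hne).symm
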